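/- Separation of a compact convex set from a proper cone at an extreme point: let C ⊂ X be a locally compact, closed, convex, proper cone with vertex x, and K ⊂ X a nonempty compact convex set, in a Hausdorff locally convex real space X. Then there exist an extreme point y of K and a continuous linear functional l such that l ≥ 0 on K − y, l ≤ 0 on C − x, and (C − x) ∩ (K − y) = {0}. -/

import Mathlib

open Set

section Aux

variable {X : Type*} [AddCommGroup X] [Module ℝ X] [TopologicalSpace X]
    [IsTopologicalAddGroup X] [ContinuousSMul ℝ X]

private lemma aux_isCompact_convexJoin {s t : Set X} (hs : IsCompact s) (ht : IsCompact t) :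
    IsCompact (convexJoin ℝ s t) := by
  have h : convexJoin ℝ s t =
      (fun p : (X × X) × ℝ => (1 - p.2) • p.1.1 + p.2 • p.1.2) '' ((s ×ˢ t) ×ˢ Icc (0 : ℝ) 1) := by
    ext z
    constructor
    · rw [mem_convexJoin]
      rintro ⟨a, ha, b, hb, hz⟩
      rw [segment_eq_image ℝ] at hz
      obtain ⟨θ, hθ, hz⟩ := hz
      exact ⟨((a, b), θ), ⟨⟨ha, hb⟩, hθ⟩, hz⟩
    · rintro ⟨⟨⟨a, b⟩, θ⟩, ⟨⟨ha, hb⟩, hθ⟩, hz⟩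
      rw [mem_convexJoin]
      refine ⟨a, ha, b, hb, ?_⟩
      rw [segment_eq_image ℝ]
      exact ⟨θ, hθ, hz⟩
  rw [h]
  refine (((hs.prod ht)).prod isCompact_Icc).image ?_
  exact ((continuous_const.sub continuous_snd).smul (continuous_fst.comp continuous_fst)).add
    (continuous_snd.smul (continuous_snd.comp continuous_fst))

end Aux

/-- Separation of a compact convex set from a proper cone at an extreme point: if `C` is
a locally compact, closed, convex, proper cone with vertex `x` and `K` a nonempty compact
convex set, then there are an extreme point `y` of `K` and a continuous linear functional
`l` with `l ≥ 0` on `K − y`, `l ≤ 0` on `C − x`, and `(C − x) ∩ (K − y) = {0}`. -/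
theorem stmt_16 {X : Type*} [AddCommGroup X] [Module ℝ X] [TopologicalSpace X]
    [IsTopologicalAddGroup X] [ContinuousSMul ℝ X] [T2Space X] [LocallyConvexSpace ℝ X]
    (C : Set X) (x : X)
    (hx : x ∈ C) (hclosed : IsClosed C) (hconvC : Convex ℝ C)
    (hcone : ∀ t : ℝ, 0 ≤ t → ∀ y ∈ C, x + t • (y - x) ∈ C)
    (hproper : ∀ y ∈ C, ∀ z ∈ C, y - x = x - z → y = x)
    (hloccpt : ∀ z ∈ C, ∃ N ∈ nhdsWithin z C, N ⊆ C ∧ IsCompact N)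
    (K : Set X) (hne : K.Nonempty) (hcpt : IsCompact K) (hconvK : Convex ℝ K) :
    ∃ y ∈ K.extremePoints ℝ, ∃ l : X →L[ℝ] ℝ,
      (∀ z ∈ K, 0 ≤ l (z - y)) ∧ (∀ c ∈ C, l (c - x) ≤ 0) ∧
      ((fun c => c - x) '' C) ∩ ((fun z => z - y) '' K) = {0} := by
  classical
  -- the translated cone
  set D : Set X := {d : X | x + d ∈ C} with hD_def
  have hD0 : (0 : X) ∈ D := by
    simp only [hD_def, mem_setOf_eq, add_zero]; exact hx
  have hDclosed : IsClosed D := hclosed.preimage (continuous_const.add continuous_id)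
  have hDcone : ∀ t : ℝ, 0 ≤ t → ∀ d ∈ D, t • d ∈ D := by
    intro t ht d hd
    have h := hcone t ht (x + d) hd
    show x + t • d ∈ C
    simpa using h
  have hDpointed : ∀ d ∈ D, -d ∈ D → d = 0 := by
    intro d hd hnd
    have h3 : (x + d) - x = x - (x + -d) := by abel
    have h4 := hproper (x + d) hd (x + -d) hnd h3
    have h5 := congrArg (fun z => z - x) h4
    simpa using h5
  have hDconv : Convex ℝ D := by
    intro a ha b hb ta tb hta htb hsum
    have hxx : ta • x + tb • x = x := by rw [← add_smul, hsum, one_smul]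
    have h2 := hconvC ha hb hta htb hsum
    have key : ta • (x + a) + tb • (x + b) = x + (ta • a + tb • b) := by
      rw [smul_add, smul_add, add_add_add_comm, hxx]
    show x + (ta • a + tb • b) ∈ C
    rw [← key]
    exact h2
  -- local compactness at the vertex
  obtain ⟨N, hN, hNC, hNcomp⟩ := hloccpt x hx
  rw [mem_nhdsWithin] at hN
  obtain ⟨V, hVopen, hxV, hVN⟩ := hN
  set M : Set X := (fun n => n - x) '' N with hM_def
  have hMcomp : IsCompact M := hNcomp.image (continuous_id.sub continuous_const)
  set V' : Set X := {d : X | x + d ∈ V} with hV'_def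
  have hV'open : IsOpen V' := hVopen.preimage (continuous_const.add continuous_id)
  have h0V' : (0 : X) ∈ V' := by
    simp only [hV'_def, mem_setOf_eq, add_zero]; exact hxV
  have hDV'M : ∀ d ∈ D, d ∈ V' → d ∈ M :=
    fun d hd hv => ⟨x + d, hVN ⟨hv, hd⟩, by simp⟩
  -- a convex open neighborhood U of 0 with closure U ⊆ V'
  obtain ⟨F, hFnhds, hFclosed, hFV'⟩ :=
    exists_mem_nhds_isClosed_subset (hV'open.mem_nhds h0V')
  obtain ⟨S, ⟨hSnhds, hSconv⟩, hSF⟩ :=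
    (LocallyConvexSpace.convex_basis_zero ℝ X).mem_iff.1 hFnhds
  set U : Set X := interior S with hU_def
  have hUopen : IsOpen U := isOpen_interior
  have h0U : (0 : X) ∈ U := mem_interior_iff_mem_nhds.2 hSnhds
  have hUconv : Convex ℝ U := hSconv.interior
  have hclUV' : closure U ⊆ V' :=
    (closure_minimal (interior_subset.trans hSF) hFclosed).trans hFV'
  -- the compact convex "cap" Q
  set Q : Set X := D ∩ closure U with hQ_def
  have hQclosed : IsClosed Q := hDclosed.inter isClosed_closure
  have hQM : Q ⊆ M := fun d hd => hDV'M d hd.1 (hclUV' hd.2)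
  have hQcomp : IsCompact Q := hMcomp.of_isClosed_subset hQclosed hQM
  have hQconv : Convex ℝ Q := hDconv.inter hUconv.closure
  have h0Q : (0 : X) ∈ Q := ⟨hD0, subset_closure h0U⟩
  have hQD : Q ⊆ D := inter_subset_left
  -- 0 is an extreme point of Q
  have h0ext : ∀ a ∈ Q, ∀ b ∈ Q, (0 : X) ∈ openSegment ℝ a b → a = 0 ∧ b = 0 := by
    intro a ha b hb h0
    obtain ⟨ta, tb, hta, htb, hsum, heq⟩ := h0
    have hsb : (ta⁻¹ * tb) • b ∈ D := hDcone _ (by positivity) b (hQD hb)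
    have hna : a = -((ta⁻¹ * tb) • b) := by
      have h1 : ta • a = -(tb • b) := eq_neg_of_add_eq_zero_left heq
      have h2 : a = ta⁻¹ • (ta • a) := by
        rw [smul_smul, inv_mul_cancel₀ hta.ne', one_smul]
      rw [h2, h1, smul_neg, smul_smul]
    have hbz : b = 0 := by
      have h6 := hDpointed _ hsb (by rw [← hna]; exact hQD ha)
      rcases smul_eq_zero.1 h6 with h | h
      · exact absurd h (by positivity : (0 : ℝ) < ta⁻¹ * tb).ne'
      · exact h
    have haz : a = 0 := by rw [hna, hbz, smul_zero, neg_zero]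
    exact ⟨haz, hbz⟩
  -- B : the "annulus" of the cap
  set B : Set X := Q \ U with hB_def
  have hBclosed : IsClosed B := hQclosed.sdiff hUopen
  have hBcomp : IsCompact B := hQcomp.of_isClosed_subset hBclosed diff_subset
  have hBQ : B ⊆ Q := diff_subset
  have h0B : (0 : X) ∉ B := fun h => h.2 h0U
  -- Milman-type argument : 0 is not in the closed convex hull of B
  have hmilman : (0 : X) ∉ closure (convexHull ℝ B) := by
    intro h0hull
    have hGopen : IsOpen {w : X | -w ∉ B} := hBclosed.isOpen_compl.preimage continuous_neg
    have h0G : (0 : X) ∈ {w : X | -w ∉ B} := by simpa using h0B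
    obtain ⟨Fw, hFwnhds, hFwclosed, hFwG⟩ :=
      exists_mem_nhds_isClosed_subset (hGopen.mem_nhds h0G)
    obtain ⟨Sw, ⟨hSwnhds, hSwconv⟩, hSwF⟩ :=
      (LocallyConvexSpace.convex_basis_zero ℝ X).mem_iff.1 hFwnhds
    set W : Set X := interior Sw with hW_def
    have hWopen : IsOpen W := isOpen_interior
    have h0W : (0 : X) ∈ W := mem_interior_iff_mem_nhds.2 hSwnhds
    have hWconv : Convex ℝ W := hSwconv.interior
    have hclWG : closure W ⊆ {w : X | -w ∉ B} :=
      (closure_minimal (interior_subset.trans hSwF) hFwclosed).trans hFwG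
    -- cover B by finitely many translated copies of W
    have hcover : B ⊆ ⋃ b ∈ B, {z : X | z - b ∈ W} := by
      intro z hz
      exact mem_biUnion hz (by simpa using h0W)
    obtain ⟨I, hIB, hIfin, hIcover⟩ := hBcomp.elim_finite_subcover_image
      (fun b _ => hWopen.preimage (continuous_id.sub continuous_const)) hcover
    set Kp : X → Set X := fun b => closure (convexHull ℝ (B ∩ {z : X | z - b ∈ W})) with hKp_def
    have hKpgood : ∀ b ∈ I, IsCompact (Kp b) ∧ Convex ℝ (Kp b) ∧ Kp b ⊆ Q ∧ (Kp b).Nonempty := by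
      intro b hb
      have hsubQ : Kp b ⊆ Q :=
        closure_minimal (convexHull_min (fun z hz => hBQ hz.1) hQconv) hQclosed
      refine ⟨hQcomp.of_isClosed_subset isClosed_closure hsubQ,
        (convex_convexHull ℝ _).closure, hsubQ, ⟨b, ?_⟩⟩
      exact subset_closure (subset_convexHull ℝ _ ⟨hIB hb, by simpa using h0W⟩)
    -- main induction on the finite index set
    have hmain : ∀ J : Set X, J.Finite →
        (∀ b ∈ J, IsCompact (Kp b) ∧ Convex ℝ (Kp b) ∧ Kp b ⊆ Q ∧ (Kp b).Nonempty) →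
        IsCompact (convexHull ℝ (⋃ b ∈ J, Kp b)) ∧
        ((0 : X) ∈ convexHull ℝ (⋃ b ∈ J, Kp b) → ∃ b ∈ J, (0 : X) ∈ Kp b) := by
      intro J hJ
      refine Set.Finite.induction_on
        (motive := fun J _ => (∀ b ∈ J, IsCompact (Kp b) ∧ Convex ℝ (Kp b) ∧ Kp b ⊆ Q ∧ (Kp b).Nonempty) →
          IsCompact (convexHull ℝ (⋃ b ∈ J, Kp b)) ∧
          ((0 : X) ∈ convexHull ℝ (⋃ b ∈ J, Kp b) → ∃ b ∈ J, (0 : X) ∈ Kp b))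
        J hJ ?_ ?_
      · intro _; constructor <;> simp
      · intro a J haJ hJfin IH hgood
        have hga := hgood a (mem_insert _ _)
        have hgJ : ∀ b ∈ J, IsCompact (Kp b) ∧ Convex ℝ (Kp b) ∧ Kp b ⊆ Q ∧ (Kp b).Nonempty :=
          fun b hb => hgood b (mem_insert_of_mem a hb)
        obtain ⟨IHc, IHm⟩ := IH hgJ
        rcases J.eq_empty_or_nonempty with rfl | hJne
        · constructor
          · simpa [hga.2.1.convexHull_eq] using hga.1
          · intro h0
            refine ⟨a, mem_insert _ _, ?_⟩
            simpa [hga.2.1.convexHull_eq] using h0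
        · have hAne : (⋃ b ∈ J, Kp b).Nonempty := by
            obtain ⟨b, hb⟩ := hJne
            obtain ⟨z, hz⟩ := (hgJ b hb).2.2.2
            exact ⟨z, mem_biUnion hb hz⟩
          have hunion : (⋃ b ∈ insert a J, Kp b) = Kp a ∪ ⋃ b ∈ J, Kp b := by
            simp [Set.biUnion_insert]
          have hEq : convexHull ℝ (⋃ b ∈ insert a J, Kp b)
              = convexJoin ℝ (Kp a) (convexHull ℝ (⋃ b ∈ J, Kp b)) := by
            rw [hunion, ← convexHull_convexHull_union_right]
            exact (hga.2.1).convexHull_union (convex_convexHull ℝ _) hga.2.2.2 hAne.convexHull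
          constructor
          · rw [hEq]; exact aux_isCompact_convexJoin hga.1 IHc
          · intro h0
            rw [hEq, mem_convexJoin] at h0
            obtain ⟨p, hp, q, hq, hseg⟩ := h0
            obtain ⟨ta, tb, hta, htb, hsum, heq⟩ := hseg
            have hqQ : q ∈ Q := by
              refine convexHull_min ?_ hQconv hq
              intro z hz
              simp only [mem_iUnion] at hz
              obtain ⟨b, hb, hzb⟩ := hz
              exact (hgJ b hb).2.2.1 hzb
            have hpQ : p ∈ Q := hga.2.2.1 hp
            rcases eq_or_lt_of_le hta with hta0 | hta'
            · have htb1 : tb = 1 := by linarith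
              have hq0 : q = 0 := by
                rw [← hta0, zero_smul, zero_add, htb1, one_smul] at heq
                exact heq
              have h0' : (0 : X) ∈ convexHull ℝ (⋃ b ∈ J, Kp b) := hq0 ▸ hq
              obtain ⟨b, hb, h0b⟩ := IHm h0'
              exact ⟨b, mem_insert_of_mem a hb, h0b⟩
            rcases eq_or_lt_of_le htb with htb0 | htb'
            · have hta1 : ta = 1 := by linarith
              have hp0 : p = 0 := by
                rw [← htb0, zero_smul, add_zero, hta1, one_smul] at heq
                exact heq
              exact ⟨a, mem_insert _ _, hp0 ▸ hp⟩
            · have hz := h0ext p hpQ q hqQ ⟨ta, tb, hta', htb', hsum, heq⟩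
              exact ⟨a, mem_insert _ _, hz.1 ▸ hp⟩
    obtain ⟨hHcomp, hHmem⟩ := hmain I hIfin hKpgood
    have hBsub : B ⊆ ⋃ b ∈ I, Kp b := by
      intro z hz
      obtain ⟨b, hb, hzb⟩ := mem_iUnion₂.1 (hIcover hz)
      exact mem_biUnion hb (subset_closure (subset_convexHull ℝ _ ⟨hz, hzb⟩))
    have h0H : (0 : X) ∈ convexHull ℝ (⋃ b ∈ I, Kp b) :=
      (closure_minimal (convexHull_mono hBsub) hHcomp.isClosed) h0hull
    obtain ⟨b, hbI, h0Kb⟩ := hHmem h0H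
    have h1 : (0 : X) - b ∈ closure W := by
      have hsub : Kp b ⊆ {z : X | z - b ∈ closure W} := by
        refine closure_minimal (convexHull_min (fun z hz => subset_closure hz.2) ?_)
          (isClosed_closure.preimage (continuous_id.sub continuous_const))
        intro p hp q hq ta tb hta htb hsum
        show (ta • p + tb • q) - b ∈ closure W
        have hbb : ta • b + tb • b = b := by rw [← add_smul, hsum, one_smul]
        have hrw : ta • (p - b) + tb • (q - b) = (ta • p + tb • q) - b := by
          have hrw2 : ta • (p - b) + tb • (q - b) = (ta • p + tb • q) - (ta • b + tb • b) := by
            rw [smul_sub, smul_sub]; abel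
          rw [hrw2, hbb]
        rw [← hrw]
        exact hWconv.closure hp hq hta htb hsum
      exact hsub h0Kb
    have h2 : -((0 : X) - b) ∉ B := hclWG h1
    rw [zero_sub, neg_neg] at h2
    exact h2 (hIB hbI)
  -- separate 0 from the closed convex hull of B
  obtain ⟨f, u, hfu, hfB⟩ := geometric_hahn_banach_point_closed
    ((convex_convexHull ℝ B).closure) isClosed_closure hmilman
  have hu0 : (0 : ℝ) < u := by simpa using hfu
  -- strict positivity of f on D \ {0}
  have hpos : ∀ d ∈ D, d ≠ 0 → 0 < f d := by
    intro d hd hd0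
    obtain ⟨g, hg⟩ := SeparatingDual.exists_eq_one (R := ℝ) hd0
    obtain ⟨q0, hq0Q, hq0max⟩ := hQcomp.exists_isMaxOn ⟨0, h0Q⟩ g.continuous.continuousOn
    set Sd : Set ℝ := Ici (0 : ℝ) ∩ (fun t : ℝ => t • d) ⁻¹' closure U with hSd_def
    have hS0 : (0 : ℝ) ∈ Sd := ⟨self_mem_Ici, by
      show (0 : ℝ) • d ∈ closure U
      rw [zero_smul]; exact subset_closure h0U⟩
    have hSQ : ∀ t ∈ Sd, t • d ∈ Q := fun t ht => ⟨hDcone t (mem_Ici.1 ht.1) d hd, ht.2⟩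
    have hSbdd : BddAbove Sd := by
      refine ⟨g q0, fun t ht => ?_⟩
      have h7 := isMaxOn_iff.1 hq0max _ (hSQ t ht)
      simpa [hg] using h7
    have hSclosed : IsClosed Sd :=
      isClosed_Ici.inter (isClosed_closure.preimage (continuous_id.smul continuous_const))
    set T := sSup Sd with hT_def
    have hTS : T ∈ Sd := hSclosed.csSup_mem ⟨0, hS0⟩ hSbdd
    have hsmall : ∀ᶠ t : ℝ in nhds 0, t • d ∈ U := by
      have hc : Continuous fun t : ℝ => t • d := continuous_id.smul continuous_const
      exact hc.continuousAt.eventually_mem (hUopen.mem_nhds (by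
        show (0 : ℝ) • d ∈ U
        rw [zero_smul]; exact h0U))
    have hTpos : 0 < T := by
      obtain ⟨t, htU, ht0⟩ :=
        ((hsmall.filter_mono nhdsWithin_le_nhds).and (self_mem_nhdsWithin
          (s := Ioi (0 : ℝ)))).exists
      have ht' : t ∈ Sd := ⟨le_of_lt ht0, subset_closure htU⟩
      exact lt_of_lt_of_le ht0 (le_csSup hSbdd ht')
    have hTU : T • d ∉ U := by
      intro hTU
      have hev : ∀ᶠ t : ℝ in nhds T, t • d ∈ U :=
        (continuous_id.smul continuous_const).continuousAt.eventually_mem (hUopen.mem_nhds hTU)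
      obtain ⟨t, htU, ht⟩ :=
        ((hev.filter_mono nhdsWithin_le_nhds).and (self_mem_nhdsWithin (s := Ioi T))).exists
      have ht' : t ∈ Sd := ⟨le_trans (mem_Ici.1 hTS.1) (le_of_lt ht), subset_closure htU⟩
      exact absurd (le_csSup hSbdd ht') (not_le.2 ht)
    have hTB : T • d ∈ B := ⟨hSQ T hTS, hTU⟩
    have hfT : u < f (T • d) := hfB _ (subset_closure (subset_convexHull ℝ _ hTB))
    have hfT' : 0 < T * f d := by
      have hmap : f (T • d) = T * f d := by
        rw [map_smul]; rfl
      nlinarith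
    by_contra hfd
    push_neg at hfd
    nlinarith
  -- choose an extreme point of `K` maximizing `f`
  obtain ⟨y0, hy0K, hy0max⟩ := hcpt.exists_isMaxOn hne f.continuous.continuousOn
  set K' : Set X := {z ∈ K | ∀ w ∈ K, f w ≤ f z} with hK'_def
  have hexp : IsExposed ℝ K K' := fun _ => ⟨f, rfl⟩
  have hK'ne : K'.Nonempty := ⟨y0, hy0K, fun w hw => isMaxOn_iff.1 hy0max w hw⟩
  obtain ⟨y, hy⟩ := (hexp.isCompact hcpt).extremePoints_nonempty hK'ne
  have hyK : y ∈ K.extremePoints ℝ := hexp.isExtreme.extremePoints_subset_extremePoints hy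
  have hyK' : y ∈ K' := extremePoints_subset hy
  refine ⟨y, hyK, -f, ?_, ?_, ?_⟩
  · intro z hz
    have h8 : f z ≤ f y := hyK'.2 z hz
    simp only [ContinuousLinearMap.neg_apply, map_sub]
    linarith
  · intro c hc
    have hcD : c - x ∈ D := by
      show x + (c - x) ∈ C
      have hce : x + (c - x) = c := by simp
      rw [hce]; exact hc
    rcases eq_or_ne (c - x) 0 with h | h
    · simp [h]
    · have h9 := hpos _ hcD h
      simp only [ContinuousLinearMap.neg_apply]
      linarith
  · ext v
    simp only [Set.mem_inter_iff, Set.mem_image, Set.mem_singleton_iff]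
    constructor
    · rintro ⟨⟨c, hc, rfl⟩, z, hz, hv⟩
      by_contra hne0
      have hcD : c - x ∈ D := by
        show x + (c - x) ∈ C
        have hce : x + (c - x) = c := by simp
        rw [hce]; exact hc
      have h1 : 0 < f (c - x) := hpos _ hcD hne0
      have h2 : f (c - x) ≤ 0 := by
        have hz' : f z ≤ f y := hyK'.2 z hz
        rw [← hv, map_sub]
        linarith
      linarith
    · rintro rfl
      exact ⟨⟨x, hx, sub_self x⟩, y, hyK.1, sub_self y⟩
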